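/- Let n ≥ 2 and let P ∈ ℤ[h₀,h₁] be a homogeneous polynomial of degree 2n−2 that is symmetric under swapping h₀ and h₁. Write P = Σ c_{a} h₀^a h₁^{2n−2−a}. Then in the ring A = ℤ[h₀,h₁]/(h₀^{n+1}, Σ_{i=0}^{n} h₀^i h₁^{n−i}), the image of P equals (c_{n−1} − c_n)·h₀^{n−1}h₁^{n−1}. -/

import Mathlib

set_option maxHeartbeats 1000000
open MvPolynomial Finset

noncomputable def h0 : MvPolynomial (Fin 2) ℤ := X 0
noncomputable def h1 : MvPolynomial (Fin 2) ℤ := X 1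

noncomputable def In (n : ℕ) : Ideal (MvPolynomial (Fin 2) ℤ) :=
  Ideal.span {h0 ^ (n + 1), ∑ i ∈ Finset.range (n + 1), h0 ^ i * h1 ^ (n - i)}

lemma fin2_eq (d : Fin 2 →₀ ℕ) : d = Finsupp.single 0 (d 0) + Finsupp.single 1 (d 1) := by
  ext i; fin_cases i <;> simp

lemma fin2_degree (d : Fin 2 →₀ ℕ) : d.degree = d 0 + d 1 := by
  rw [show d.degree = ∑ i ∈ d.support, d i from rfl, Finset.sum_subset (Finset.subset_univ d.support)]
  · simp [Fin.sum_univ_two]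
  · intro i _ hi; simpa using Finsupp.notMem_support_iff.mp hi

lemma homog_decomp (m : ℕ) (P : MvPolynomial (Fin 2) ℤ) (hhom : P.IsHomogeneous (2*m+2)) :
    P = ∑ a ∈ Finset.range (2*m+3),
      C (coeff (Finsupp.single (0:Fin 2) a + Finsupp.single 1 (2*m+2-a)) P) *
        h0 ^ a * h1 ^ (2*m+2-a) := by
  have key : ∀ (k : ℤ) (a b : ℕ), C k * h0 ^ a * h1 ^ b
      = monomial (Finsupp.single (0:Fin 2) a + Finsupp.single 1 b) k := by
    intro k a b
    rw [h0, h1, X_pow_eq_monomial, X_pow_eq_monomial, mul_assoc, monomial_mul, one_mul,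
      C_mul_monomial, mul_one]
  ext d
  rw [coeff_sum]
  simp only [key, coeff_monomial]
  by_cases h : d 0 + d 1 = 2*m+2
  · rw [Finset.sum_eq_single (d 0)]
    · have heq : (Finsupp.single (0:Fin 2) (d 0) + Finsupp.single 1 (2*m+2 - d 0)) = d := by
        have h1' : 2*m+2 - d 0 = d 1 := by omega
        rw [h1']; exact (fin2_eq d).symm
      rw [if_pos heq, heq]
    · intro b hb hbne
      rw [if_neg]
      intro he
      apply hbne
      have h0' := congrArg (fun f => f 0) he
      simpa using h0'
    · intro hd0
      exact absurd (Finset.mem_range.mpr (by omega)) hd0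
  · have hz : coeff d P = 0 := hhom.coeff_eq_zero (by rw [fin2_degree]; omega)
    rw [hz, Finset.sum_eq_zero]
    intro b hb
    rw [if_neg]
    intro he
    have e0 := congrArg (fun f => f 0) he
    have e1 := congrArg (fun f => f 1) he
    simp only [Finsupp.add_apply, Finsupp.single_apply] at e0 e1
    simp at e0 e1
    have : b < 2*m+3 := Finset.mem_range.mp hb
    omega

/-- Let n ≥ 2 and let P ∈ ℤ[h₀,h₁] be homogeneous of degree 2n−2 and symmetric under
    swapping h₀ and h₁, with coefficients c a = coeff of h₀^a h₁^{2n−2−a}. Then in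
    A = ℤ[h₀,h₁]/(h₀^{n+1}, Σ_{i=0}^{n} h₀^i h₁^{n−i}), the image of P equals
    (c_{n−1} − c_n)·h₀^{n−1}h₁^{n−1}. -/
theorem symmetric_class_reduction (n : ℕ) (hn : 2 ≤ n) (P : MvPolynomial (Fin 2) ℤ)
    (hhom : P.IsHomogeneous (2 * n - 2))
    (hsymm : MvPolynomial.rename (Equiv.swap (0 : Fin 2) 1) P = P)
    (c : ℕ → ℤ)
    (hc : ∀ a, c a = MvPolynomial.coeff
      (Finsupp.single (0 : Fin 2) a + Finsupp.single (1 : Fin 2) (2 * n - 2 - a)) P) :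
    Ideal.Quotient.mk (In n) P =
      Ideal.Quotient.mk (In n) (C (c (n - 1) - c n) * h0 ^ (n - 1) * h1 ^ (n - 1)) := by
  obtain ⟨m, rfl⟩ : ∃ m, n = m + 2 := ⟨n - 2, by omega⟩
  have hdeg : 2 * (m + 2) - 2 = 2 * m + 2 := by omega
  rw [hdeg] at hhom
  simp only [hdeg] at hc
  set φ := Ideal.Quotient.mk (In (m + 2)) with hφ
  -- images of the generators
  have hg1 : φ (h0 ^ (m + 3)) = 0 := by
    rw [Ideal.Quotient.eq_zero_iff_mem, In]
    exact Ideal.subset_span (by norm_num)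
  have hg2 : φ (∑ i ∈ Finset.range (m + 3), h0 ^ i * h1 ^ (m + 2 - i)) = 0 := by
    rw [Ideal.Quotient.eq_zero_iff_mem, In]
    exact Ideal.subset_span (by norm_num)
  set M : ℕ → MvPolynomial (Fin 2) ℤ ⧸ In (m+2) := fun a => φ (h0 ^ a * h1 ^ (2*m+2-a)) with hM
  have hMa : ∀ a, M a = φ (h0 ^ a * h1 ^ (2*m+2-a)) := fun a => rfl
  -- Fact A : high powers of h0 vanish
  have factA : ∀ a, m + 3 ≤ a → M a = 0 := by
    intro a ha
    have : h0 ^ a * h1 ^ (2*m+2-a) = h0 ^ (m+3) * (h0 ^ (a - (m+3)) * h1 ^ (2*m+2-a)) := by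
      rw [← mul_assoc, ← pow_add]
      congr 2
      omega
    rw [hMa, this, map_mul, hg1, zero_mul]
  -- Fact B : translated relations
  have factB : ∀ b, b ≤ m → ∑ i ∈ Finset.range (m+3), M (b + i) = 0 := by
    intro b hb
    have step : ∀ i ∈ Finset.range (m+3),
        M (b + i) = φ (h0 ^ b * h1 ^ (m - b) * (h0 ^ i * h1 ^ (m + 2 - i))) := by
      intro i hi
      have hi' : i < m + 3 := Finset.mem_range.mp hi
      have e : m - b + (m + 2 - i) = 2*m+2 - (b+i) := by omega
      rw [hMa, mul_mul_mul_comm, ← pow_add, ← pow_add, e]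
    rw [Finset.sum_congr rfl step, ← map_sum, ← Finset.mul_sum, map_mul, hg2, mul_zero]
  -- Fact C : M a = 0 for a + 1 ≤ m
  have factC : ∀ a, a + 1 ≤ m → M a = 0 := by
    intro a ha
    have h1' := factB a (by omega)
    have h2' := factB (a+1) (by omega)
    have e1 : ∑ i ∈ Finset.range (m+3), M (a + i)
        = (∑ i ∈ Finset.range (m+2), M (a + 1 + i)) + M a := by
      rw [Finset.sum_range_succ']
      congr 1
      exact Finset.sum_congr rfl fun i _ => by congr 1; omega
    have e2 : ∑ i ∈ Finset.range (m+3), M (a + 1 + i)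
        = (∑ i ∈ Finset.range (m+2), M (a + 1 + i)) + M (a + 1 + (m+2)) := by
      rw [Finset.sum_range_succ]
    have hz : M (a + 1 + (m + 2)) = 0 := factA _ (by omega)
    rw [e2, hz, add_zero] at h2'
    rw [e1, h2', zero_add] at h1'
    exact h1'
  -- Fact D : M m = -(M (m+1) + M (m+2))
  have factD : M m = -(M (m+1) + M (m+2)) := by
    have hB := factB m le_rfl
    have hsum : ∑ i ∈ Finset.range (m+3), M (m + i) = M m + M (m+1) + M (m+2) := by
      rw [← Finset.sum_subset (Finset.range_subset_range.mpr (by omega : 3 ≤ m + 3))]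
      · rw [Finset.sum_range_succ, Finset.sum_range_succ, Finset.sum_range_succ,
          Finset.sum_range_zero, zero_add]
        simp
      · intro i _ hi
        have : 3 ≤ i := by simpa using hi
        exact factA _ (by omega)
    rw [hsum] at hB
    linear_combination hB
  -- symmetry : c m = c (m+2)
  have hsym : c m = c (m + 2) := by
    have hmap : Finsupp.mapDomain (⇑(Equiv.swap (0:Fin 2) 1))
        (Finsupp.single 0 m + Finsupp.single 1 (m+2))
        = Finsupp.single 0 (m+2) + Finsupp.single 1 m := by
      rw [Finsupp.mapDomain_add, Finsupp.mapDomain_single, Finsupp.mapDomain_single,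
        Equiv.swap_apply_left, Equiv.swap_apply_right, add_comm]
    have key := coeff_rename_mapDomain (⇑(Equiv.swap (0:Fin 2) 1)) (Equiv.injective _) P
      (Finsupp.single 0 m + Finsupp.single 1 (m+2))
    rw [hsymm, hmap] at key
    have em : 2*m+2 - m = m + 2 := by omega
    have em2 : 2*m+2 - (m+2) = m := by omega
    rw [hc m, hc (m+2), em, em2]
    exact key.symm
  -- decompose P
  have hPd := homog_decomp m P hhom
  have hcoef : ∀ a, coeff (Finsupp.single (0:Fin 2) a + Finsupp.single 1 (2*m+2-a)) P = c a := by
    intro a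
    rw [hc a]
  rw [hPd, map_sum]
  have hterm : ∀ a ∈ Finset.range (2*m+3),
      φ (C (coeff (Finsupp.single (0:Fin 2) a + Finsupp.single 1 (2*m+2-a)) P)
        * h0 ^ a * h1 ^ (2*m+2-a))
        = φ (C (c a)) * M a := by
    intro a _
    rw [hcoef a, hMa, mul_assoc, map_mul]
  rw [Finset.sum_congr rfl hterm]
  have hsplit : ∑ a ∈ Finset.range (2*m+3), φ (C (c a)) * M a
      = φ (C (c m)) * M m + φ (C (c (m+1))) * M (m+1) + φ (C (c (m+2))) * M (m+2) := by
    rw [← Finset.sum_subset (show Finset.Icc m (m+2) ⊆ Finset.range (2*m+3) by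
        intro x hx; simp only [Finset.mem_Icc] at hx; exact Finset.mem_range.mpr (by omega))]
    · have hIcc : Finset.Icc m (m+2) = {m, m+1, m+2} := by
        ext x; simp only [Finset.mem_Icc, Finset.mem_insert, Finset.mem_singleton]; omega
      have hm1 : m ∉ ({m+1, m+2} : Finset ℕ) := by
        simp only [Finset.mem_insert, Finset.mem_singleton]; omega
      have hm2 : m + 1 ∉ ({m+2} : Finset ℕ) := by
        simp only [Finset.mem_singleton]; omega
      rw [hIcc, Finset.sum_insert hm1, Finset.sum_insert hm2, Finset.sum_singleton]
      ring
    · intro a _ ha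
      simp only [Finset.mem_Icc, not_and, not_le] at ha
      rcases lt_or_ge a m with h | h
      · rw [factC a (by omega), mul_zero]
      · rw [factA a (by omega), mul_zero]
  rw [hsplit, factD, hsym]
  have hrhs : φ (C (c (m + 2 - 1) - c (m + 2)) * h0 ^ (m + 2 - 1) * h1 ^ (m + 2 - 1))
      = (φ (C (c (m+1))) - φ (C (c (m+2)))) * M (m+1) := by
    have h1' : m + 2 - 1 = m + 1 := by omega
    have e : 2*m+2 - (m+1) = m+1 := by omega
    have h2' : M (m+1) = φ (h0 ^ (m+1) * h1 ^ (m+1)) := by rw [hMa, e]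
    have hpoly : C (c (m+1) - c (m+2)) * h0 ^ (m+1) * h1 ^ (m+1)
        = C (c (m+1)) * (h0 ^ (m+1) * h1 ^ (m+1)) - C (c (m+2)) * (h0 ^ (m+1) * h1 ^ (m+1)) := by
      rw [C_sub]; ring
    rw [h1', hpoly, map_sub, map_mul φ (C (c (m+1))) (h0^(m+1)*h1^(m+1)),
      map_mul φ (C (c (m+2))) (h0^(m+1)*h1^(m+1)), h2', sub_mul]
  rw [hrhs]
  ring
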